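/- arXiv:2103.17073 — 4 statements merged into one kernel-verified Lean document; each statement's English description precedes it below -/
import Mathlib

section
/- Let $(\mathfrak{g},\{\cdot,\cdot\})$ be a Leibniz algebra, i.e. $\{x,\{y,z\}\}=\{\{x,y\},z\}+\{y,\{x,z\}\}$ for all $x,y,z$. Define the skew-symmetrized bracket $\llbracket x,y\rrbracket = \tfrac12(\{x,y\}-\{y,x\})$ and the Jacobiator $J_{x,y,z} = \llbracket x,\llbracket y,z\rrbracket\rrbracket + \llbracket y,\llbracket z,x\rrbracket\rrbracket + \llbracket z,\llbracket x,y\rrbracket\rrbracket$. Then for all $x,y,z\in\mathfrak{g}$, the Jacobiator $J_{x,y,z}$ lies in the left center $Z(\mathfrak{g})=\{c\in\mathfrak{g}:\{c,y\}=0\ \forall y\}$. -/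
/-- The Jacobiator of the skew-symmetrization of a Leibniz bracket lies in the left center. -/
theorem leibniz_jacobiator_mem_leftCenter
    {g : Type*} [AddCommGroup g] [Module ℝ g]
    (br : g →ₗ[ℝ] g →ₗ[ℝ] g)
    (hleib : ∀ x y z : g, br x (br y z) = br (br x y) z + br y (br x z))
    (C : g → g → g)
    (hC : ∀ x y : g, C x y = (2:ℝ)⁻¹ • (br x y - br y x))
    (J : g → g → g → g)
    (hJ : ∀ x y z : g, J x y z = C x (C y z) + C y (C z x) + C z (C x y)) :
    ∀ x y z w : g, br (J x y z) w = 0 := by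
  -- squares annihilate: br (br a b) w = - br (br b a) w
  have sq : ∀ a b w : g, br (br a b) w = - br (br b a) w := by
    intro a b w
    have h1 := hleib a b w
    have h2 := hleib b a w
    calc br (br a b) w = br a (br b w) - br b (br a w) := by rw [h1]; abel
      _ = - br (br b a) w := by rw [h2]; abel
  have brC : ∀ a b w : g, br (C a b) w = br (br a b) w := by
    intro a b w
    rw [hC]
    rw [map_smul, map_sub, LinearMap.smul_apply, LinearMap.sub_apply, sq b a w]
    rw [sub_neg_eq_add, ← two_smul ℝ, smul_smul]
    norm_num
  -- key rewriting identity
  have key : ∀ a b c w : g,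
      br (br a (br b c)) w = br (br b (br a c)) w - br (br c (br a b)) w := by
    intro a b c w
    have h := congrArg (fun t => br t w) (hleib a b c)
    simp only [map_add, LinearMap.add_apply] at h
    rw [h, sq (br a b) c w]
    abel
  intro x y z w
  rw [hJ, map_add, map_add, LinearMap.add_apply, LinearMap.add_apply,
    brC, brC, brC, hC y z, hC z x, hC x y]
  simp only [map_smul, map_sub, LinearMap.smul_apply, LinearMap.sub_apply]
  have e1 := key x y z w
  have e2 := key y z x w
  have e3 := key z x y w
  have f1 := key x z y w
  have f2 := key y x z w
  have f3 := key z y x w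
  linear_combination (norm := module) (6:ℝ)⁻¹ • (e1 + e2 + e3) - (6:ℝ)⁻¹ • (f1 + f2 + f3)
end

section
/- Let $V$ be a vector space over a field of characteristic $0$. Define on the 2-term complex $V\hookrightarrow \mathfrak{gl}(V)\oplus V$ (with differential the inclusion $v\mapsto 0+v$) the brackets $l_2(A+u,B+v)=[A,B]_C+\tfrac12(Av-Bu)$, $l_2(A+u,v)=\tfrac12 Av$, and $l_3(A+u,B+v,C+w)=-\tfrac14([A,B]_C w+[B,C]_C u+[C,A]_C v)$. Then these data satisfy the axioms of a 2-term $L_\infty$-algebra: (1) $d\,l_2(x,a)=l_2(x,da)$ and $l_2(da,b)=l_2(a,db)$; (2) the sum of cyclic permutations of $l_2(l_2(x,y),z)$ equals $-d\,l_3(x,y,z)$; (3) the sum of cyclic permutations of $l_2(l_2(x,y),a)$ equals $-l_3(x,y,da)$; (4) the degree-4 coherence identity for $l_3$ holds. -/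
/-- A 2-term L∞-algebra structure on the complex `d : g1 → g0`. -/
structure IsL2Alg (K : Type*) [Field K] {g0 g1 : Type*} [AddCommGroup g0] [Module K g0]
    [AddCommGroup g1] [Module K g1]
    (d : g1 → g0) (l2 : g0 → g0 → g0) (l2m : g0 → g1 → g1)
    (l3 : g0 → g0 → g0 → g1) : Prop where
  d_lin : IsLinearMap K d
  l2_lin : ∀ x, IsLinearMap K (l2 x)
  l2_lin' : ∀ y, IsLinearMap K (fun x => l2 x y)
  l2m_lin : ∀ x, IsLinearMap K (l2m x)
  l2m_lin' : ∀ a, IsLinearMap K (fun x => l2m x a)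
  l3_lin : ∀ x y, IsLinearMap K (l3 x y)
  l3_lin' : ∀ y z, IsLinearMap K (fun x => l3 x y z)
  l2_skew : ∀ x y, l2 x y = - l2 y x
  l3_skew12 : ∀ x y z, l3 x y z = - l3 y x z
  l3_skew23 : ∀ x y z, l3 x y z = - l3 x z y
  ax_chain : ∀ x a, d (l2m x a) = l2 x (d a)
  ax_mixed : ∀ a b, l2m (d a) b = - l2m (d b) a
  ax_jac0 : ∀ x y z, l2 (l2 x y) z + l2 (l2 y z) x + l2 (l2 z x) y = - d (l3 x y z)
  ax_jac1 : ∀ x y a, l2m (l2 x y) a - l2m x (l2m y a) + l2m y (l2m x a) = - l3 x y (d a)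
  ax_l3 : ∀ w x y z,
    l3 (l2 w x) y z - l3 (l2 w y) x z + l3 (l2 w z) x y + l3 (l2 x y) w z
      + l3 (l2 y z) w x - l3 (l2 x z) w y
      + l2m z (l3 w x y) + l2m x (l3 w y z) - l2m y (l3 w x z) - l2m w (l3 x y z) = 0


set_option maxHeartbeats 4000000 in
/-- The omni-Lie algebra of a vector space `V` carries a 2-term L∞-algebra structure. -/
theorem omniLie_isL2Alg
    (K : Type*) [Field K] [CharZero K] (V : Type*) [AddCommGroup V] [Module K V] :
    IsL2Alg K (g0 := Module.End K V × V) (g1 := V)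
      (fun v => ((0 : Module.End K V), v))
      (fun e f => (e.1 * f.1 - f.1 * e.1, (2:K)⁻¹ • (e.1 f.2 - f.1 e.2)))
      (fun e v => (2:K)⁻¹ • (e.1 v))
      (fun e f h => (-(4:K)⁻¹) • ((e.1 * f.1 - f.1 * e.1) h.2
        + (f.1 * h.1 - h.1 * f.1) e.2 + (h.1 * e.1 - e.1 * h.1) f.2)) := by
  constructor <;> intros <;>
    first
    | (constructor <;> intros <;>
        (first
         | refine Prod.ext ?_ ?_
         | skip) <;>
        simp only [Prod.fst_add, Prod.snd_add, Prod.smul_fst, Prod.smul_snd,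
          Prod.fst_neg, Prod.snd_neg, Prod.fst_zero, Prod.snd_zero,
          Module.End.mul_apply, LinearMap.add_apply, LinearMap.sub_apply, LinearMap.neg_apply,
          LinearMap.smul_apply, LinearMap.zero_apply, map_add, map_smul, map_sub, map_neg,
          smul_add, smul_sub, smul_neg, smul_smul, smul_mul_assoc, mul_smul_comm,
          show ((4:K)⁻¹ = 2⁻¹*2⁻¹) by norm_num] <;>
        first | rfl | (noncomm_ring; done) | (match_scalars <;> (first | ring1 | (norm_num; done) | (ring_nf; norm_num; done))))
    | ((first
         | refine Prod.ext ?_ ?_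
         | skip) <;>
        simp only [Prod.fst_add, Prod.snd_add, Prod.smul_fst, Prod.smul_snd,
          Prod.fst_neg, Prod.snd_neg, Prod.fst_zero, Prod.snd_zero,
          Module.End.mul_apply, LinearMap.add_apply, LinearMap.sub_apply, LinearMap.neg_apply,
          LinearMap.smul_apply, LinearMap.zero_apply, map_add, map_smul, map_sub, map_neg,
          smul_add, smul_sub, smul_neg, smul_smul, neg_neg, mul_zero, zero_mul,
          sub_zero, zero_sub, map_zero, smul_zero, add_zero, zero_add, neg_zero,
          show ((4:K)⁻¹ = 2⁻¹*2⁻¹) by norm_num] <;>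
        first | rfl | (noncomm_ring; done) | (match_scalars <;> (first | ring1 | (norm_num; done) | (ring_nf; norm_num; done))))
end

section
/- Let $(\mathfrak{g},d,l_2,l_3)$ be a 2-term $L_\infty$-algebra. Define $\mathrm{ad}_0(x)=(l_2(x,\cdot)|_{\mathfrak{g}_0}, l_2(x,\cdot)|_{\mathfrak{g}_{-1}})$, $\mathrm{ad}_1(a)=l_2(a,\cdot):\mathfrak{g}_0\to\mathfrak{g}_{-1}$, and $\mathrm{ad}_2(x,y)=-l_3(x,y,\cdot):\mathfrak{g}_0\to\mathfrak{g}_{-1}$. Then $(\mathrm{ad}_0,\mathrm{ad}_1,\mathrm{ad}_2):\mathfrak{g}\to\mathfrak{gl}(\mathfrak{g})$ is a homomorphism of 2-term $L_\infty$-algebras into the strict Lie 2-algebra $\mathfrak{gl}(\mathfrak{g}_{-1}\xrightarrow{d}\mathfrak{g}_0)$ (the adjoint representation). -/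
/-- A homomorphism of 2-term L∞-algebras. -/
structure IsL2Hom (K : Type*) [Field K]
    {g0 g1 h0 h1 : Type*} [AddCommGroup g0] [Module K g0] [AddCommGroup g1] [Module K g1]
    [AddCommGroup h0] [Module K h0] [AddCommGroup h1] [Module K h1]
    (dg : g1 → g0) (l2g : g0 → g0 → g0) (l2mg : g0 → g1 → g1) (l3g : g0 → g0 → g0 → g1)
    (dh : h1 → h0) (l2h : h0 → h0 → h0) (l2mh : h0 → h1 → h1) (l3h : h0 → h0 → h0 → h1)
    (f0 : g0 → h0) (f1 : g1 → h1) (f2 : g0 → g0 → h1) : Prop where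
  f0_lin : IsLinearMap K f0
  f1_lin : IsLinearMap K f1
  f2_lin : ∀ x, IsLinearMap K (f2 x)
  f2_skew : ∀ x y, f2 x y = - f2 y x
  chain : ∀ a, f0 (dg a) = dh (f1 a)
  hom2 : ∀ x y, f0 (l2g x y) - l2h (f0 x) (f0 y) = dh (f2 x y)
  hom2m : ∀ x a, f1 (l2mg x a) - l2mh (f0 x) (f1 a) = f2 x (dg a)
  hom3 : ∀ x y z, f1 (l3g x y z) - l3h (f0 x) (f0 y) (f0 z)
    = l2mh (f0 x) (f2 y z) + l2mh (f0 y) (f2 z x) + l2mh (f0 z) (f2 x y)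
      - f2 (l2g x y) z - f2 (l2g y z) x - f2 (l2g z x) y

/-- Pairs of endomorphisms commuting with the differential of a 2-term complex. -/
def glZero (K : Type*) [Field K] {V0 V1 : Type*}
    [AddCommGroup V0] [Module K V0] [AddCommGroup V1] [Module K V1]
    (p : V1 →ₗ[K] V0) : Submodule K (Module.End K V0 × Module.End K V1) where
  carrier := {A | A.1 ∘ₗ p = p ∘ₗ A.2}
  add_mem' := by
    intro a b ha hb
    simp only [Set.mem_setOf_eq, Prod.fst_add, Prod.snd_add] at *
    simp [LinearMap.add_comp, LinearMap.comp_add, ha, hb]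
  zero_mem' := by simp [Set.mem_setOf_eq]
  smul_mem' := by
    intro c a ha
    simp only [Set.mem_setOf_eq, Prod.smul_fst, Prod.smul_snd] at *
    simp [LinearMap.smul_comp, LinearMap.comp_smul, ha]

lemma mem_glZero_iff {K : Type*} [Field K] {V0 V1 : Type*}
    [AddCommGroup V0] [Module K V0] [AddCommGroup V1] [Module K V1]
    (p : V1 →ₗ[K] V0) (A : Module.End K V0 × Module.End K V1) :
    A ∈ glZero K p ↔ A.1 ∘ₗ p = p ∘ₗ A.2 := Iff.rfl

lemma comm_mem_glZero {K : Type*} [Field K] {V0 V1 : Type*}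
    [AddCommGroup V0] [Module K V0] [AddCommGroup V1] [Module K V1]
    (p : V1 →ₗ[K] V0) (A B : Module.End K V0 × Module.End K V1)
    (hA : A ∈ glZero K p) (hB : B ∈ glZero K p) :
    (A.1 * B.1 - B.1 * A.1, A.2 * B.2 - B.2 * A.2) ∈ glZero K p := by
  have hA' : ∀ w, A.1 (p w) = p (A.2 w) := fun w => LinearMap.congr_fun hA w
  have hB' : ∀ w, B.1 (p w) = p (B.2 w) := fun w => LinearMap.congr_fun hB w
  rw [mem_glZero_iff]
  ext v
  simp [Module.End.mul_apply, LinearMap.comp_apply, LinearMap.sub_apply, hA', hB']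

lemma delta_mem_glZero {K : Type*} [Field K] {V0 V1 : Type*}
    [AddCommGroup V0] [Module K V0] [AddCommGroup V1] [Module K V1]
    (p : V1 →ₗ[K] V0) (D : V0 →ₗ[K] V1) :
    ((p ∘ₗ D, D ∘ₗ p) : Module.End K V0 × Module.End K V1) ∈ glZero K p := by
  rw [mem_glZero_iff]
  ext v
  simp [LinearMap.comp_apply]

/-- The adjoint representation: a 2-term L∞-algebra maps homomorphically to the strict Lie
2-algebra `gl` of its underlying complex via `ad₀(x) = (l2 x, l2m x)`, `ad₁(a) = [a,·]`,
`ad₂(x,y) = -l3(x,y,·)`. -/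
theorem adjoint_rep_is_L2Hom
    (K : Type*) [Field K] {g0 g1 : Type*}
    [AddCommGroup g0] [Module K g0] [AddCommGroup g1] [Module K g1]
    (d : g1 →ₗ[K] g0) (l2 : g0 →ₗ[K] g0 →ₗ[K] g0) (l2m : g0 →ₗ[K] g1 →ₗ[K] g1)
    (l3 : g0 →ₗ[K] g0 →ₗ[K] g0 →ₗ[K] g1)
    (h : IsL2Alg K (fun a => d a) (fun x y => l2 x y) (fun x a => l2m x a)
      (fun x y z => l3 x y z)) :
    IsL2Hom K
      -- source: the 2-term L∞-algebra g
      (fun a => d a) (fun x y => l2 x y) (fun x a => l2m x a) (fun x y z => l3 x y z)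
      -- target: the strict Lie 2-algebra gl(g₋₁ → g₀)
      (fun (D : g0 →ₗ[K] g1) => (⟨(d ∘ₗ D, D ∘ₗ d), delta_mem_glZero d D⟩ : glZero K d))
      (fun A B => ⟨(A.1.1 * B.1.1 - B.1.1 * A.1.1, A.1.2 * B.1.2 - B.1.2 * A.1.2),
        comm_mem_glZero d A.1 B.1 A.2 B.2⟩)
      (fun A D => A.1.2 ∘ₗ D - D ∘ₗ A.1.1)
      (fun _ _ _ => (0 : g0 →ₗ[K] g1))
      -- the adjoint representation
      (fun x => ⟨(l2 x, l2m x),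
        (mem_glZero_iff d _).mpr (by ext a; exact (h.ax_chain x a).symm)⟩)
      (fun a => - l2m.flip a)
      (fun x y => - l3 x y) := by

  have sk2 : ∀ x y : g0, l2 x y = - l2 y x := h.l2_skew
  have sk12 : ∀ x y z : g0, l3 x y z = - l3 y x z := h.l3_skew12
  have sk23 : ∀ x y z : g0, l3 x y z = - l3 x z y := h.l3_skew23
  have hch : ∀ (x : g0) (a : g1), d (l2m x a) = l2 x (d a) := h.ax_chain
  have hmx : ∀ a b : g1, l2m (d a) b = - l2m (d b) a := h.ax_mixed
  have hj0 : ∀ x y z : g0,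
      l2 (l2 x y) z + l2 (l2 y z) x + l2 (l2 z x) y = - d (l3 x y z) := h.ax_jac0
  have hj1 : ∀ (x y : g0) (a : g1),
      l2m (l2 x y) a - l2m x (l2m y a) + l2m y (l2m x a) = - l3 x y (d a) := h.ax_jac1
  have hl3 : ∀ w x y z : g0,
      l3 (l2 w x) y z - l3 (l2 w y) x z + l3 (l2 w z) x y + l3 (l2 x y) w z
        + l3 (l2 y z) w x - l3 (l2 x z) w y
        + l2m z (l3 w x y) + l2m x (l3 w y z) - l2m y (l3 w x z) - l2m w (l3 x y z) = 0 :=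
    h.ax_l3
  have swap3 : ∀ u v t : g0, l3 u v t = l3 t u v := fun u v t => by
    linear_combination (norm := module) sk23 u v t - sk12 u t v
  have l3neg1 : ∀ u v t s : g0, l3 (l2 u v) t s = - l3 (l2 v u) t s := fun u v t s => by
    rw [sk2 u v]; simp
  constructor
  · exact ⟨fun x y => by apply Subtype.ext; simp [Prod.ext_iff],
      fun c x => by apply Subtype.ext; simp [Prod.ext_iff]⟩
  · exact ⟨fun a b => by rw [map_add]; module, fun c a => by rw [map_smul]; module⟩
  · exact fun x => ⟨fun y z => by rw [map_add]; module, fun c y => by rw [map_smul]; module⟩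
  · intro x y
    ext z
    simp only [LinearMap.neg_apply, neg_neg]
    linear_combination (norm := module) - sk12 x y z
  · intro a
    apply Subtype.ext
    refine Prod.ext ?_ ?_ <;> ext b <;>
      simp only [LinearMap.coe_comp, Function.comp_apply, LinearMap.neg_apply,
        LinearMap.flip_apply, map_neg]
    · linear_combination (norm := module) sk2 (d a) b + hch b a
    · linear_combination (norm := module) hmx a b
  · intro x y
    apply Subtype.ext
    refine Prod.ext ?_ ?_ <;> ext z <;>
      simp only [Submodule.coe_sub, Prod.fst_sub, Prod.snd_sub, LinearMap.sub_apply,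
        Module.End.mul_apply, LinearMap.coe_comp, Function.comp_apply, LinearMap.neg_apply,
        map_neg]
    · have e : l2 y (l2 x z) = - l2 y (l2 z x) := by rw [sk2 x z, map_neg]
      linear_combination (norm := module) hj0 x y z - sk2 (l2 y z) x - sk2 (l2 z x) y + e
    · linear_combination (norm := module) hj1 x y z
  · intro x a
    ext y
    simp only [LinearMap.sub_apply, LinearMap.coe_comp, Function.comp_apply,
      LinearMap.neg_apply, LinearMap.flip_apply, Module.End.mul_apply, map_neg]
    linear_combination (norm := module) - hj1 x y a + sk23 x y (d a)
  · intro x y z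
    ext w
    simp only [LinearMap.sub_apply, LinearMap.add_apply, LinearMap.coe_comp,
      Function.comp_apply, LinearMap.neg_apply, LinearMap.zero_apply,
      LinearMap.flip_apply, map_neg]
    have e1 : l3 y z w = l3 w y z := swap3 y z w
    have e2 : l3 z x w = - l3 w x z := by
      linear_combination (norm := module) swap3 z x w + sk23 w z x
    have e2' : l2m y (l3 z x w) = - l2m y (l3 w x z) := by rw [e2, map_neg]
    have e3 : l3 x y w = l3 w x y := swap3 x y w
    have e4 : l3 y z (l2 x w) = - l3 (l2 w x) y z := by
      linear_combination (norm := module) swap3 y z (l2 x w) + l3neg1 x w y z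
    have e5 : l3 z x (l2 y w) = l3 (l2 w y) x z := by
      linear_combination (norm := module) swap3 z x (l2 y w) + l3neg1 y w z x
        - sk23 (l2 w y) z x
    have e6 : l3 x y (l2 z w) = - l3 (l2 w z) x y := by
      linear_combination (norm := module) swap3 x y (l2 z w) + l3neg1 z w x y
    have e9 : l3 (l2 z x) y w = l3 (l2 x z) w y := by
      linear_combination (norm := module) l3neg1 z x y w - sk23 (l2 x z) y w
    linear_combination (norm := module) hl3 w x y z + congrArg (fun t => l2m x t) e1
      + e2' + congrArg (fun t => l2m z t) e3 - e4 - e5 - e6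
      - sk23 (l2 x y) z w - sk23 (l2 y z) x w - e9
end

section
/- Let $(\mathfrak{g},[\cdot,\cdot]_\mathfrak{g})$ be a Lie algebra with a 2-term representation up to homotopy on $V_{-1}\xrightarrow{\partial}V_0$, given by $(\phi_0,\phi_1,\phi_2)$. Define on $V_{-1}\xrightarrow{(0,\partial)}\mathfrak{g}\oplus V_0$ the brackets $l_2(x+u,y+v)=[x,y]_\mathfrak{g}+x\triangleright v-y\triangleright u$, $l_2(x+u,m)=x\triangleright m$, and $l_3(x+u,y+v,z+w)=-(x,y)\triangleright w-(y,z)\triangleright u-(z,x)\triangleright v$, where $x\triangleright(\cdot)=\phi_0(x)$ and $(x,y)\triangleright(\cdot)=\phi_2(x,y)$. Then this is a 2-term $L_\infty$-algebra (the semidirect product). -/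
/-- The semidirect product of a Lie algebra with a 2-term representation up to homotopy is a
2-term L∞-algebra. -/
theorem semidirect_product_L2Alg
    (K : Type*) [Field K]
    (g : Type*) [LieRing g] [LieAlgebra K g]
    {V0 V1 : Type*} [AddCommGroup V0] [Module K V0] [AddCommGroup V1] [Module K V1]
    (p : V1 →ₗ[K] V0)
    -- the representation up to homotopy (φ0, φ2)
    (φ0 : g → Module.End K V0 × Module.End K V1)
    (hφ0lin : IsLinearMap K φ0)
    (hφ0chain : ∀ x : g, (φ0 x).1 ∘ₗ p = p ∘ₗ (φ0 x).2)
    (φ2 : g → g → (V0 →ₗ[K] V1))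
    (hφ2lin : ∀ x, IsLinearMap K (φ2 x)) (hφ2lin' : ∀ y, IsLinearMap K (fun x => φ2 x y))
    (hφ2skew : ∀ x y, φ2 x y = - φ2 y x)
    -- φ0 is a homomorphism up to δφ2
    (hrep1 : ∀ x y : g,
      (φ0 ⁅x, y⁆).1 - ((φ0 x).1 * (φ0 y).1 - (φ0 y).1 * (φ0 x).1) = p ∘ₗ φ2 x y
      ∧ (φ0 ⁅x, y⁆).2 - ((φ0 x).2 * (φ0 y).2 - (φ0 y).2 * (φ0 x).2) = φ2 x y ∘ₗ p)
    -- cocycle-type condition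
    (hrep2 : ∀ x y z : g,
      ((φ0 x).2 ∘ₗ φ2 y z - φ2 y z ∘ₗ (φ0 x).1)
      + ((φ0 y).2 ∘ₗ φ2 z x - φ2 z x ∘ₗ (φ0 y).1)
      + ((φ0 z).2 ∘ₗ φ2 x y - φ2 x y ∘ₗ (φ0 z).1)
      - φ2 ⁅x, y⁆ z - φ2 ⁅y, z⁆ x - φ2 ⁅z, x⁆ y = 0) :
    IsL2Alg K (g0 := g × V0) (g1 := V1)
      (fun m => ((0 : g), p m))
      (fun e f => (⁅e.1, f.1⁆, (φ0 e.1).1 f.2 - (φ0 f.1).1 e.2))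
      (fun e m => (φ0 e.1).2 m)
      (fun e f r => - φ2 e.1 f.1 r.2 - φ2 f.1 r.1 e.2 - φ2 r.1 e.1 f.2) := by
  -- pointwise version of the cocycle condition, with all φ2 atoms in canonical orientation
  have hz : φ0 (0 : g) = 0 := by
    have := hφ0lin.map_smul (0 : K) 0
    simpa using this
  have φ0add : ∀ a b : g, φ0 (a + b) = φ0 a + φ0 b := hφ0lin.map_add
  have φ0smul : ∀ (c : K) (a : g), φ0 (c • a) = c • φ0 a := hφ0lin.map_smul
  have h11 : ∀ a b : g, ∀ v : V0,
      (φ0 ⁅a, b⁆).1 v = (φ0 a).1 ((φ0 b).1 v) - (φ0 b).1 ((φ0 a).1 v) + p (φ2 a b v) := by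
    intro a b v
    have := LinearMap.congr_fun (hrep1 a b).1 v
    simp only [LinearMap.sub_apply, Module.End.mul_apply, LinearMap.comp_apply] at this
    linear_combination (norm := module) this
  have h12 : ∀ a b : g, ∀ m : V1,
      (φ0 ⁅a, b⁆).2 m = (φ0 a).2 ((φ0 b).2 m) - (φ0 b).2 ((φ0 a).2 m) + φ2 a b (p m) := by
    intro a b m
    have := LinearMap.congr_fun (hrep1 a b).2 m
    simp only [LinearMap.sub_apply, Module.End.mul_apply, LinearMap.comp_apply] at this
    linear_combination (norm := module) this
  have hch : ∀ (x : g) (m : V1), (φ0 x).1 (p m) = p ((φ0 x).2 m) :=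
    fun x m => LinearMap.congr_fun (hφ0chain x) m
  have h2'' : ∀ a b c : g, ∀ v : V0,
      (φ0 a).2 (φ2 b c v) - φ2 b c ((φ0 a).1 v)
      - (φ0 b).2 (φ2 a c v) + φ2 a c ((φ0 b).1 v)
      + (φ0 c).2 (φ2 a b v) - φ2 a b ((φ0 c).1 v)
      - φ2 ⁅a, b⁆ c v - φ2 ⁅b, c⁆ a v + φ2 ⁅a, c⁆ b v = 0 := by
    intro a b c v
    have h := LinearMap.congr_fun (hrep2 a b c) v
    simp only [LinearMap.add_apply, LinearMap.sub_apply, LinearMap.comp_apply,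
      LinearMap.zero_apply] at h
    have e1 : φ2 c a = - φ2 a c := hφ2skew c a
    have e2 : (⁅c, a⁆ : g) = -⁅a, c⁆ := by rw [← lie_skew]
    have e3 : φ2 (-⁅a, c⁆) b = - φ2 ⁅a, c⁆ b := (hφ2lin' b).map_neg ⁅a, c⁆
    rw [e1, e2, e3] at h
    simp only [LinearMap.neg_apply, map_neg] at h
    linear_combination (norm := module) h
  constructor
  · exact ⟨fun a b => by simp [Prod.ext_iff], fun c a => by simp [Prod.ext_iff]⟩
  · intro x
    refine ⟨fun f f' => ?_, fun c f => ?_⟩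
    · simp [Prod.ext_iff, φ0add, map_add]; abel
    · simp [Prod.ext_iff, φ0smul, map_smul, smul_sub]
  · intro y
    refine ⟨fun f f' => ?_, fun c f => ?_⟩
    · simp [Prod.ext_iff, φ0add, map_add]; abel
    · simp [Prod.ext_iff, φ0smul, map_smul, smul_sub]
  · intro x
    exact ⟨fun a b => by simp, fun c a => by simp⟩
  · intro a
    refine ⟨fun x y => ?_, fun c x => ?_⟩
    · simp [φ0add]
    · simp [φ0smul]
  · intro x y
    refine ⟨fun r r' => ?_, fun c r => ?_⟩
    · simp [map_add, (hφ2lin y.1).map_add, (hφ2lin' x.1).map_add, LinearMap.add_apply]; abel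
    · simp [map_smul, (hφ2lin y.1).map_smul, (hφ2lin' x.1).map_smul, LinearMap.smul_apply,
        smul_sub, smul_neg]
  · intro y z
    refine ⟨fun x x' => ?_, fun c x => ?_⟩
    · simp [map_add, (hφ2lin z.1).map_add, (hφ2lin' y.1).map_add, LinearMap.add_apply]; abel
    · simp [map_smul, (hφ2lin z.1).map_smul, (hφ2lin' y.1).map_smul, LinearMap.smul_apply,
        smul_sub, smul_neg]
  · intro x y
    have hb : (⁅x.1, y.1⁆ : g) = -⁅y.1, x.1⁆ := by rw [← lie_skew]
    simp only [Prod.neg_mk, Prod.mk.injEq]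
    exact ⟨hb, by abel⟩
  · intro x y z
    rw [hφ2skew x.1 y.1, hφ2skew y.1 z.1, hφ2skew z.1 x.1]
    simp only [LinearMap.neg_apply]
    module
  · intro x y z
    rw [hφ2skew x.1 y.1, hφ2skew y.1 z.1, hφ2skew z.1 x.1]
    simp only [LinearMap.neg_apply]
    module
  · intro x a
    refine Prod.ext ?_ ?_ <;> simp [hch, hz]
  · intro a b
    simp [hz]
  · intro x y z
    simp only [Prod.mk_add_mk, Prod.neg_mk, Prod.mk.injEq]
    constructor
    · rw [← lie_skew ⁅x.1, y.1⁆ z.1, ← lie_skew ⁅y.1, z.1⁆ x.1, ← lie_skew ⁅z.1, x.1⁆ y.1]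
      have jac := lie_jacobi x.1 y.1 z.1
      linear_combination (norm := module) -jac
    · simp only [h11, map_sub, map_add, map_neg, hz, LinearMap.zero_apply]
      module
  · intro x y a
    simp only [h12, (hφ2lin y.1).map_zero, (hφ2lin' x.1).map_zero, hz,
      LinearMap.zero_apply, Prod.fst, Prod.snd]
    abel
  · intro w x y z
    obtain ⟨w1, w2⟩ := w
    obtain ⟨x1, x2⟩ := x
    obtain ⟨y1, y2⟩ := y
    obtain ⟨z1, z2⟩ := z
    simp only [map_sub, map_add, map_neg]
    rw [hφ2skew y1 w1, hφ2skew z1 w1, hφ2skew z1 x1,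
      hφ2skew z1 ⁅w1, x1⁆, hφ2skew z1 ⁅w1, y1⁆, hφ2skew y1 ⁅w1, z1⁆,
      hφ2skew z1 ⁅x1, y1⁆, hφ2skew x1 ⁅y1, z1⁆, hφ2skew y1 ⁅x1, z1⁆]
    simp only [LinearMap.neg_apply, map_neg, neg_neg]
    linear_combination (norm := module) h2'' w1 x1 y1 z2 + h2'' w1 y1 z1 x2
      - h2'' w1 x1 z1 y2 - h2'' x1 y1 z1 w2
end
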